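/- arXiv:1211.2071 — 2 statements merged into one kernel-verified Lean document; each statement's English description precedes it below -/
import Mathlib

section
/- Let η ∈ (0, 1/2) be small enough that a_η = √(2 log λ_f(η)) is well defined and positive, and let μ_η be the positive root of μ² + 2 a_η μ = λ_e(η)². For μ ≥ 0 let θ̂_μ(x) = η μ φ(x−μ; 1) / ( (1−η) φ(x; 1) + η φ(x−μ; 1) ) be the posterior-mean (Bayes) estimator for the two-point prior (1−η)δ_0 + ηδ_μ under unit-variance Gaussian noise. Then there exists ε_η with ε_η → 0 as η → 0 such that for all μ ∈ [0, μ_η]: E_{Z ~ N(0,1)} ( θ̂_μ(μ + Z) − μ )² ≥ μ² (1 − ε_η). -/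
open MeasureTheory ProbabilityTheory Filter
open scoped ENNReal NNReal

noncomputable section

/-- Real-valued Kullback–Leibler divergence `KL(μ ‖ ν) = ∫ log (dμ/dν) dμ`. -/
def KLdiv {E : Type*} [MeasurableSpace E] (μ ν : Measure E) : ℝ :=
  ∫ x, Real.log ((μ.rnDeriv ν x).toReal) ∂μ

/-- Product Gaussian measure `⊗_{i<n} N(θ i, v)` on `ℝⁿ`. -/
def gaussPi {n : ℕ} (θ : Fin n → ℝ) (v : ℝ≥0) : Measure (Fin n → ℝ) :=
  Measure.pi fun i => gaussianReal (θ i) v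

/-- KL prediction risk in the n-dimensional Gaussian sequence model:
past observation `X ~ N_n(θ, I)`, future `Y ~ N_n(θ, r I)`. -/
def risk {n : ℕ} (r : ℝ≥0) (θ : Fin n → ℝ)
    (phat : (Fin n → ℝ) → Measure (Fin n → ℝ)) : ℝ :=
  ∫ x, KLdiv (gaussPi θ r) (phat x) ∂(gaussPi θ 1)

/-- Univariate KL prediction risk: past `X ~ N(θ,1)`, future `Y ~ N(θ,r)`. -/
def risk1 (r : ℝ≥0) (θ : ℝ) (phat : ℝ → Measure ℝ) : ℝ :=
  ∫ x, KLdiv (gaussianReal θ r) (phat x) ∂(gaussianReal θ 1)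

/-- The ℓ₀-sparse parameter set `Θ_n[s]`. -/
def sparseSet (n s : ℕ) : Set (Fin n → ℝ) :=
  {θ | Set.ncard {i | θ i ≠ 0} ≤ s}

/-- Minimax KL risk over all (Markov kernel) predictive density estimators. -/
def minimaxRisk {n : ℕ} (r : ℝ≥0) (Θ : Set (Fin n → ℝ)) : ℝ :=
  ⨅ κ : {κ : Kernel (Fin n → ℝ) (Fin n → ℝ) // IsMarkovKernel κ},
    ⨆ θ : Θ, risk r θ.1 (fun x => κ.1 x)
/-- `λ_e(η) = √(2 log(η⁻¹(1−η)))`. -/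
def lamE (η : ℝ) : ℝ := Real.sqrt (2 * Real.log (η⁻¹ * (1 - η)))

/-- Oracle variance `v_w = r/(1+r)`. -/
def vw (r : ℝ) : ℝ := r / (1 + r)

/-- `λ_f(η) = √v_w · λ_e(η)`. -/
def lamF (r η : ℝ) : ℝ := Real.sqrt (vw r) * lamE η

/-- Bayes KL risk of a prior on `ℝⁿ`: infimum of integrated risk over Markov kernels. -/
def bayesRisk {n : ℕ} (r : ℝ≥0) (π : Measure (Fin n → ℝ)) : ℝ :=
  ⨅ κ : {κ : Kernel (Fin n → ℝ) (Fin n → ℝ) // IsMarkovKernel κ},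
    ∫ θ, risk r θ (fun x => κ.1 x) ∂π

/-- Univariate integrated (Bayes) risk of an estimator w.r.t. a prior. -/
def intRisk1 (r : ℝ≥0) (π : Measure ℝ) (phat : ℝ → Measure ℝ) : ℝ :=
  ∫ θ, risk1 r θ phat ∂π

/-- Univariate Bayes KL risk of a prior. -/
def bayesRisk1 (r : ℝ≥0) (π : Measure ℝ) : ℝ :=
  ⨅ κ : {κ : Kernel ℝ ℝ // IsMarkovKernel κ},
    intRisk1 r π (fun x => κ.1 x)

/-- The sparse prior class `𝔪(η)`. -/
def priorClass (η : ℝ) : Set (Measure ℝ) :=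
  {π | IsProbabilityMeasure π ∧ π {θ : ℝ | θ ≠ 0} ≤ ENNReal.ofReal η}

/-- Univariate sparse minimax predictive risk `β(η, r)`. -/
def betaMinimax (r : ℝ≥0) (η : ℝ) : ℝ :=
  ⨅ κ : {κ : Kernel ℝ ℝ // IsMarkovKernel κ},
    ⨆ π : priorClass η, intRisk1 r π.1 (fun x => κ.1 x)

/-- Two-point sparse prior `(1−η)δ₀ + ηδ_λ`. -/
def twoPointPrior (η lam : ℝ) : Measure ℝ :=
  ENNReal.ofReal (1 - η) • Measure.dirac 0 + ENNReal.ofReal η • Measure.dirac lam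

/-- `a_η = √(2 log λ_f(η))`. -/
def aEta (r η : ℝ) : ℝ := Real.sqrt (2 * Real.log (lamF r η))

/-- `μ_η`: the positive root of `μ² + 2 a_η μ = λ_e(η)²`. -/
def muEta (r η : ℝ) : ℝ := Real.sqrt (aEta r η ^ 2 + lamE η ^ 2) - aEta r η

/-- `ν_η = √v_w · μ_η`. -/
def nuEta (r η : ℝ) : ℝ := Real.sqrt (vw r) * muEta r η

/-- Support points of the cluster prior: `μ_k = (1+2r)^{k-1} ν_η` for `k ≥ 1`. -/
def clusterMu (r η : ℝ) (k : ℕ) : ℝ := (1 + 2 * r) ^ (k - 1) * nuEta r η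

/-- `K = max{k : μ_k ≤ λ_e(η) + a_η}` (as the cardinality of `{1, …, K}`). -/
def clusterK (r η : ℝ) : ℕ :=
  Set.ncard {k : ℕ | 1 ≤ k ∧ clusterMu r η k ≤ lamE η + aEta r η}

/-- The cluster prior `π_CL[η, r]`. -/
def clusterPrior (r η : ℝ) : Measure ℝ :=
  ENNReal.ofReal (1 - η) • Measure.dirac 0 +
    ENNReal.ofReal (η / (2 * clusterK r η)) •
      ∑ k ∈ Finset.Icc 1 (clusterK r η),
        (Measure.dirac (clusterMu r η k) + Measure.dirac (-(clusterMu r η k)))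

/-- Bayes predictive density: the measure on `ℝ` with Lebesgue density
`y ↦ ∫ φ(y−θ; r) φ(x−θ; 1) π(dθ) / ∫ φ(x−θ; 1) π(dθ)`. -/
def bayesPredMeasure (r : ℝ≥0) (π : Measure ℝ) (x : ℝ) : Measure ℝ :=
  MeasureTheory.volume.withDensity fun y => ENNReal.ofReal
    ((∫ θ, gaussianPDFReal θ r y * gaussianPDFReal θ 1 x ∂π) /
      (∫ θ, gaussianPDFReal θ 1 x ∂π))

/-- Univariate threshold predictive density estimator based on the cluster prior:
`p̂_π(·|x)` for `|x| ≤ λ_e(η)` and `N(x, 1+r)` above the threshold. -/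
def pTCL (r : ℝ≥0) (η : ℝ) (x : ℝ) : Measure ℝ :=
  if |x| ≤ lamE η then bayesPredMeasure r (clusterPrior (r : ℝ) η) x
  else gaussianReal x (1 + r)

/-- Posterior-mean (Bayes) estimator for the two-point prior `(1−η)δ₀ + ηδ_μ`
under unit-variance Gaussian noise. -/
def thetaHatTwoPoint (η μ x : ℝ) : ℝ :=
  η * μ * gaussianPDFReal μ 1 x /
    ((1 - η) * gaussianPDFReal 0 1 x + η * gaussianPDFReal μ 1 x)


/-! ### Auxiliary lemmas for STATEMENT 7 -/

section Statement7Aux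

lemma tendsto_sqrt_atTop' : Tendsto Real.sqrt atTop atTop := by
  rw [tendsto_atTop_atTop]
  intro b
  refine ⟨(max b 0) ^ 2, fun a ha => le_trans (le_max_left b 0) ?_⟩
  rw [Real.le_sqrt (le_max_right b 0) (le_trans (sq_nonneg _) ha)]
  exact ha

lemma contGauss (m : ℝ) (v : ℝ≥0) : Continuous (gaussianPDFReal m v) := by
  unfold gaussianPDFReal; fun_prop

variable {r η : ℝ}

lemma log_pos_aux (hη : η ∈ Set.Ioo (0:ℝ) (1/2)) : 0 < Real.log (η⁻¹ * (1 - η)) := by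
  apply Real.log_pos
  rw [inv_mul_eq_div, lt_div_iff₀ hη.1]
  linarith [hη.2]

lemma lamE_pos (hη : η ∈ Set.Ioo (0:ℝ) (1/2)) : 0 < lamE η :=
  Real.sqrt_pos.2 (by linarith [log_pos_aux hη])

lemma lamE_sq (hη : η ∈ Set.Ioo (0:ℝ) (1/2)) :
    lamE η ^ 2 = 2 * Real.log (η⁻¹ * (1 - η)) :=
  Real.sq_sqrt (by linarith [log_pos_aux hη])

lemma sqrt_vw_pos (hr : 0 < r) : 0 < Real.sqrt (vw r) :=
  Real.sqrt_pos.2 (div_pos hr (by linarith))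

lemma sqrt_vw_lt_one (hr : 0 < r) : Real.sqrt (vw r) < 1 := by
  rw [show (1:ℝ) = Real.sqrt 1 by simp]
  exact Real.sqrt_lt_sqrt (le_of_lt (div_pos hr (by linarith)))
    ((div_lt_one (by linarith)).2 (by linarith))

lemma one_lt_lamE (hr : 0 < r) (hlf : 1 < lamF r η) : 1 < lamE η := by
  have h := hlf
  unfold lamF at h
  nlinarith [sqrt_vw_lt_one hr, sqrt_vw_pos hr, Real.sqrt_nonneg (2 * Real.log (η⁻¹ * (1 - η))),
    (by rfl : Real.sqrt (2 * Real.log (η⁻¹ * (1 - η))) = lamE η)]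

lemma aEta_pos (hlf : 1 < lamF r η) : 0 < aEta r η :=
  Real.sqrt_pos.2 (by linarith [Real.log_pos hlf])

lemma aEta_sq (hlf : 1 < lamF r η) : aEta r η ^ 2 = 2 * Real.log (lamF r η) :=
  Real.sq_sqrt (by linarith [Real.log_pos hlf])

lemma aEta_lt_lamE (hr : 0 < r) (hη : η ∈ Set.Ioo (0:ℝ) (1/2)) (hlf : 1 < lamF r η) :
    aEta r η < lamE η := by
  have hle1 : 1 < lamE η := one_lt_lamE hr hlf
  have hfe : lamF r η ≤ lamE η := by
    unfold lamF
    nlinarith [sqrt_vw_lt_one hr, sqrt_vw_pos hr]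
  have hlog : Real.log (lamF r η) ≤ Real.log (lamE η) :=
    Real.log_le_log (by linarith) hfe
  have hlog2 : Real.log (lamE η) < lamE η - 1 :=
    Real.log_lt_sub_one_of_pos (by linarith) (by linarith)
  have hsq : aEta r η ^ 2 < lamE η ^ 2 := by
    rw [aEta_sq hlf]; nlinarith
  have ha0 : 0 ≤ aEta r η := Real.sqrt_nonneg _
  nlinarith

lemma muEta_pos (hη : η ∈ Set.Ioo (0:ℝ) (1/2)) (hlf : 1 < lamF r η) : 0 < muEta r η := by
  unfold muEta
  have h : aEta r η < Real.sqrt (aEta r η ^ 2 + lamE η ^ 2) := by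
    apply Real.lt_sqrt_of_sq_lt
    nlinarith [lamE_pos hη]
  linarith

lemma muEta_sq (hη : η ∈ Set.Ioo (0:ℝ) (1/2)) (hlf : 1 < lamF r η) :
    muEta r η ^ 2 + 2 * aEta r η * muEta r η = lamE η ^ 2 := by
  have hS : Real.sqrt (aEta r η ^ 2 + lamE η ^ 2) ^ 2 = aEta r η ^ 2 + lamE η ^ 2 :=
    Real.sq_sqrt (by positivity)
  unfold muEta
  nlinarith [hS]

lemma lamE_le_three_muEta (hr : 0 < r) (hη : η ∈ Set.Ioo (0:ℝ) (1/2)) (hlf : 1 < lamF r η) :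
    lamE η ≤ 3 * muEta r η := by
  have ha := aEta_lt_lamE hr hη hlf
  have ha0 : 0 ≤ aEta r η := Real.sqrt_nonneg _
  have hl := lamE_pos hη
  have h : aEta r η + lamE η / 3 ≤ Real.sqrt (aEta r η ^ 2 + lamE η ^ 2) := by
    rw [Real.le_sqrt (by positivity) (by positivity)]
    nlinarith
  unfold muEta
  linarith

lemma aEta_div_le (hr : 0 < r) (hη : η ∈ Set.Ioo (0:ℝ) (1/2)) (hlf : 1 < lamF r η) :
    aEta r η / (2 * muEta r η) ≤ 3 / 2 := by
  have hM := muEta_pos hη hlf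
  rw [div_le_iff₀ (by linarith)]
  have := aEta_lt_lamE hr hη hlf
  have := lamE_le_three_muEta hr hη hlf
  linarith

lemma poly_step {a M le μ z : ℝ} (hM : 0 < M) (ha : 0 < a) (hale : a < le) (hle1 : 1 < le)
    (hid : M ^ 2 + 2 * a * M = le ^ 2) (hμ0 : 0 < μ) (hμM : μ ≤ M)
    (hz : z ≤ a - a / (2 * M)) : μ ^ 2 + 2 * μ * z ≤ le ^ 2 - a := by
  set w := a / (2 * M) with hwdef
  have hw : 2 * M * w = a := by rw [hwdef]; field_simp
  have h2 : 0 ≤ M + μ + 2 * a - 2 * w := by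
    have hMp : 0 < M * (M + μ + 2 * a - 2 * w) := by nlinarith [mul_nonneg hμ0.le hM.le]
    nlinarith [hMp]
  have hz' : μ * z ≤ μ * (a - w) := mul_le_mul_of_nonneg_left hz hμ0.le
  nlinarith [mul_nonneg (sub_nonneg.2 hμM) h2, hz', hw]

lemma denom_pos {η μ : ℝ} (hη0 : 0 < η) (hη1 : η < 1) (x : ℝ) :
    0 < (1 - η) * gaussianPDFReal 0 1 x + η * gaussianPDFReal μ 1 x := by
  have h1 := gaussianPDFReal_pos 0 1 x one_ne_zero
  have h2 := gaussianPDFReal_pos μ 1 x one_ne_zero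
  nlinarith

lemma thetaHat_nonneg {η μ : ℝ} (hη0 : 0 < η) (hη1 : η < 1) (hμ : 0 ≤ μ) (x : ℝ) :
    0 ≤ thetaHatTwoPoint η μ x := by
  have h2 := gaussianPDFReal_pos μ 1 x one_ne_zero
  exact div_nonneg (by positivity) (denom_pos hη0 hη1 x).le

lemma thetaHat_le {η μ : ℝ} (hη0 : 0 < η) (hη1 : η < 1) (hμ : 0 ≤ μ) (x : ℝ) :
    thetaHatTwoPoint η μ x ≤ μ := by
  have h1 := gaussianPDFReal_pos 0 1 x one_ne_zero
  have h2 := gaussianPDFReal_pos μ 1 x one_ne_zero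
  rw [thetaHatTwoPoint, div_le_iff₀ (denom_pos hη0 hη1 x)]
  nlinarith [mul_nonneg hμ (mul_nonneg (by linarith : (0:ℝ) ≤ 1 - η) h1.le)]

lemma gauss_eval (m x : ℝ) :
    gaussianPDFReal m 1 x = (Real.sqrt (2 * Real.pi))⁻¹ * Real.exp (-(x - m) ^ 2 / 2) := by
  rw [gaussianPDFReal]
  norm_num

set_option maxHeartbeats 1000000 in
lemma key_bound (r η μ z : ℝ) (hr : 0 < r) (hη : η ∈ Set.Ioo (0:ℝ) (1/2))
    (hlf : 1 < lamF r η) (hμ : μ ∈ Set.Icc 0 (muEta r η))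
    (hz : z ≤ aEta r η - aEta r η / (2 * muEta r η)) :
    μ ^ 2 * (1 - (1 + Real.exp (aEta r η / 2))⁻¹) ^ 2 ≤
      (thetaHatTwoPoint η μ (μ + z) - μ) ^ 2 := by
  have hη0 : 0 < η := hη.1
  have hη2 : η < 1/2 := hη.2
  set a := aEta r η with hadef
  set M := muEta r η with hMdef
  set le := lamE η with hledef
  have ha : 0 < a := aEta_pos hlf
  have hM : 0 < M := muEta_pos hη hlf
  have hale : a < le := aEta_lt_lamE hr hη hlf
  have hle1 : 1 < le := one_lt_lamE hr hlf
  have hid : M ^ 2 + 2 * a * M = le ^ 2 := muEta_sq hη hlf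
  set δ := (1 + Real.exp (a / 2))⁻¹ with hδdef
  have hE : 0 < Real.exp (a / 2) := Real.exp_pos _
  have hδ0 : 0 < δ := by positivity
  have hδ1 : δ < 1 := by
    rw [hδdef, inv_lt_one_iff₀]
    right; linarith
  rcases eq_or_lt_of_le hμ.1 with h0 | hμpos
  · simp [thetaHatTwoPoint, ← h0]
  have hpoly : μ ^ 2 + 2 * μ * z ≤ le ^ 2 - a :=
    poly_step hM ha hale hle1 hid hμpos hμ.2 hz
  have hlogδ : Real.log (1 - δ) = a / 2 + Real.log δ := by
    have h1δ : 1 - δ = Real.exp (a / 2) * δ := by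
      rw [hδdef]
      field_simp
      ring
    rw [h1δ, Real.log_mul (Real.exp_ne_zero _) (ne_of_gt hδ0), Real.log_exp]
  have hlogη : Real.log (1 - η) - Real.log η = le ^ 2 / 2 := by
    have h := lamE_sq hη
    rw [Real.log_mul (inv_ne_zero (ne_of_gt hη0)) (by linarith), Real.log_inv] at h
    rw [hledef]; linarith
  have hkey : η * (1 - δ) * gaussianPDFReal μ 1 (μ + z) ≤
      δ * (1 - η) * gaussianPDFReal 0 1 (μ + z) := by
    rw [gauss_eval, gauss_eval]
    have hC : 0 < (Real.sqrt (2 * Real.pi))⁻¹ := by positivity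
    have hcore : η * (1 - δ) * Real.exp (-(μ + z - μ) ^ 2 / 2) ≤
        δ * (1 - η) * Real.exp (-(μ + z - 0) ^ 2 / 2) := by
      have hl : η * (1 - δ) * Real.exp (-(μ + z - μ) ^ 2 / 2) =
          Real.exp (Real.log η + Real.log (1 - δ) + -(μ + z - μ) ^ 2 / 2) := by
        rw [Real.exp_add, Real.exp_add, Real.exp_log hη0, Real.exp_log (by linarith)]
      have hrw : δ * (1 - η) * Real.exp (-(μ + z - 0) ^ 2 / 2) =
          Real.exp (Real.log δ + Real.log (1 - η) + -(μ + z - 0) ^ 2 / 2) := by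
        rw [Real.exp_add, Real.exp_add, Real.exp_log hδ0, Real.exp_log (by linarith)]
      rw [hl, hrw, Real.exp_le_exp]
      nlinarith [hpoly, hlogδ, hlogη]
    calc η * (1 - δ) * ((Real.sqrt (2 * Real.pi))⁻¹ * Real.exp (-(μ + z - μ) ^ 2 / 2))
        = (Real.sqrt (2 * Real.pi))⁻¹ * (η * (1 - δ) * Real.exp (-(μ + z - μ) ^ 2 / 2)) := by
          ring
      _ ≤ (Real.sqrt (2 * Real.pi))⁻¹ * (δ * (1 - η) * Real.exp (-(μ + z - 0) ^ 2 / 2)) :=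
          mul_le_mul_of_nonneg_left hcore hC.le
      _ = δ * (1 - η) * ((Real.sqrt (2 * Real.pi))⁻¹ * Real.exp (-(μ + z - 0) ^ 2 / 2)) := by
          ring
  have hθle : thetaHatTwoPoint η μ (μ + z) ≤ δ * μ := by
    rw [thetaHatTwoPoint, div_le_iff₀ (denom_pos hη0 (by linarith) (μ + z))]
    nlinarith [mul_le_mul_of_nonneg_left hkey hμpos.le]
  have hθ0 : 0 ≤ thetaHatTwoPoint η μ (μ + z) :=
    thetaHat_nonneg hη0 (by linarith) hμ.1 (μ + z)
  have h1 : (1 - δ) * μ ≤ μ - thetaHatTwoPoint η μ (μ + z) := by nlinarith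
  have h2 : 0 ≤ (1 - δ) * μ := by nlinarith
  nlinarith [mul_le_mul h1 h1 h2 (by linarith)]

end Statement7Aux

/-- uniformly over `μ ∈ [0, μ_η]`, the Bayes rule of the two-point
prior "estimates 0": its quadratic risk at `μ` is at least `μ²(1 − ε_η)` with
`ε_η → 0` as `η → 0⁺`.  (The hypothesis `1 < λ_f(η)` makes `a_η = √(2 log λ_f(η))`
well defined and positive.) -/
theorem two_point_bayes_rule_invisibility (r : ℝ≥0) (hr : 0 < r) :
    ∃ ε : ℝ → ℝ, Tendsto ε (nhdsWithin 0 (Set.Ioi 0)) (nhds 0) ∧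
      ∀ η ∈ Set.Ioo (0 : ℝ) (1 / 2), 1 < lamF (r : ℝ) η →
        ∀ μ ∈ Set.Icc (0 : ℝ) (muEta (r : ℝ) η),
          μ ^ 2 * (1 - ε η) ≤
            ∫ z, (thetaHatTwoPoint η μ (μ + z) - μ) ^ 2 ∂(gaussianReal 0 1) := by
  have hrr : 0 < (r : ℝ) := hr
  set rr : ℝ := (r : ℝ) with hrrdef
  refine ⟨fun η => 1 - (1 - (1 + Real.exp (aEta rr η / 2))⁻¹) ^ 2 *
      ((gaussianReal 0 1 : Measure ℝ)
        (Set.Iic (aEta rr η - aEta rr η / (2 * muEta rr η)))).toReal, ?_, ?_⟩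
  · -- the tendsto part
    have hmul : Tendsto (fun η : ℝ => η⁻¹ * (1 - η)) (nhdsWithin 0 (Set.Ioi 0)) atTop := by
      apply Filter.Tendsto.atTop_mul_pos (by norm_num : (0:ℝ) < 1) tendsto_inv_nhdsGT_zero
      exact ((continuous_const.sub continuous_id).tendsto' 0 1 (by norm_num)).mono_left
        nhdsWithin_le_nhds
    have hlamE : Tendsto lamE (nhdsWithin 0 (Set.Ioi 0)) atTop := by
      unfold lamE
      exact tendsto_sqrt_atTop'.comp
        ((Real.tendsto_log_atTop.comp hmul).const_mul_atTop (by norm_num : (0:ℝ) < 2))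
    have hlamF : Tendsto (lamF rr) (nhdsWithin 0 (Set.Ioi 0)) atTop := by
      unfold lamF
      exact hlamE.const_mul_atTop (sqrt_vw_pos hrr)
    have haEta : Tendsto (aEta rr) (nhdsWithin 0 (Set.Ioi 0)) atTop := by
      unfold aEta
      exact tendsto_sqrt_atTop'.comp
        ((Real.tendsto_log_atTop.comp hlamF).const_mul_atTop (by norm_num : (0:ℝ) < 2))
    have hgood : ∀ᶠ η in nhdsWithin 0 (Set.Ioi 0),
        η ∈ Set.Ioo (0:ℝ) (1/2) ∧ 1 < lamF rr η := by
      filter_upwards [Ioo_mem_nhdsGT_of_mem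
        (by norm_num : (0:ℝ) ∈ Set.Ico (0:ℝ) (1/2)), hlamF.eventually_gt_atTop 1] with η h1 h2
      exact ⟨h1, h2⟩
    have hS : Tendsto (fun η => aEta rr η - aEta rr η / (2 * muEta rr η))
        (nhdsWithin 0 (Set.Ioi 0)) atTop := by
      apply tendsto_atTop_mono' _ _ (tendsto_atTop_add_const_right _ (-(3/2)) haEta)
      filter_upwards [hgood] with η hg
      have h := aEta_div_le hrr hg.1 hg.2
      show aEta rr η + -(3/2) ≤ aEta rr η - aEta rr η / (2 * muEta rr η)
      linarith
    have hdelta : Tendsto (fun η => (1 + Real.exp (aEta rr η / 2))⁻¹)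
        (nhdsWithin 0 (Set.Ioi 0)) (nhds 0) := by
      apply tendsto_inv_atTop_zero.comp
      apply tendsto_atTop_add_const_left _ 1
      exact Real.tendsto_exp_atTop.comp (haEta.atTop_div_const (by norm_num : (0:ℝ) < 2))
    have hbase : Tendsto (fun t : ℝ => ((gaussianReal 0 1 : Measure ℝ) (Set.Iic t)).toReal)
        atTop (nhds 1) := by
      have h := tendsto_measure_Iic_atTop (μ := (gaussianReal 0 1 : Measure ℝ))
      rw [measure_univ] at h
      have h2 := (ENNReal.tendsto_toReal (by norm_num : (1:ℝ≥0∞) ≠ ⊤)).comp h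
      exact h2
    have hPhi : Tendsto (fun η => ((gaussianReal 0 1 : Measure ℝ)
        (Set.Iic (aEta rr η - aEta rr η / (2 * muEta rr η)))).toReal)
        (nhdsWithin 0 (Set.Ioi 0)) (nhds 1) := hbase.comp hS
    have hfinal : Tendsto (fun η => 1 - (1 - (1 + Real.exp (aEta rr η / 2))⁻¹) ^ 2 *
        ((gaussianReal 0 1 : Measure ℝ)
          (Set.Iic (aEta rr η - aEta rr η / (2 * muEta rr η)))).toReal)
        (nhdsWithin 0 (Set.Ioi 0)) (nhds (1 - (1 - 0) ^ 2 * 1)) :=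
      Tendsto.sub tendsto_const_nhds (((tendsto_const_nhds.sub hdelta).pow 2).mul hPhi)
    simpa using hfinal
  · intro η hη hlf μ hμ
    have hη1 : η < 1 := by linarith [hη.2]
    set s := aEta rr η - aEta rr η / (2 * muEta rr η) with hsdef
    set δ := (1 + Real.exp (aEta rr η / 2))⁻¹ with hδdef
    set f := fun z => (thetaHatTwoPoint η μ (μ + z) - μ) ^ 2 with hfdef
    have hcont : Continuous f := by
      have hd : ∀ x : ℝ, ((1 - η) * gaussianPDFReal 0 1 x + η * gaussianPDFReal μ 1 x) ≠ 0 :=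
        fun x => (denom_pos hη.1 hη1 x).ne'
      have hθ : Continuous (thetaHatTwoPoint η μ) := by
        unfold thetaHatTwoPoint
        exact (continuous_const.mul (contGauss μ 1)).div
          ((continuous_const.mul (contGauss 0 1)).add (continuous_const.mul (contGauss μ 1))) hd
      exact ((hθ.comp (continuous_const.add continuous_id)).sub continuous_const).pow 2
    have hbd : ∀ z : ℝ, ‖f z‖ ≤ μ ^ 2 := by
      intro z
      have h1 := thetaHat_nonneg hη.1 hη1 hμ.1 (μ + z)
      have h2 := thetaHat_le hη.1 hη1 hμ.1 (μ + z)
      show ‖(thetaHatTwoPoint η μ (μ + z) - μ) ^ 2‖ ≤ μ ^ 2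
      rw [Real.norm_eq_abs, abs_of_nonneg (sq_nonneg (thetaHatTwoPoint η μ (μ + z) - μ))]
      nlinarith
    have hint : Integrable f (gaussianReal 0 1) := by
      apply Integrable.mono' (integrable_const (μ ^ 2)) hcont.aestronglyMeasurable
      exact ae_of_all _ hbd
    have hlow : ∀ z ∈ Set.Iic s, μ ^ 2 * (1 - δ) ^ 2 ≤ f z :=
      fun z hz => key_bound rr η μ z hrr hη hlf hμ hz
    calc μ ^ 2 * (1 - (1 - (1 - δ) ^ 2 *
          ((gaussianReal 0 1 : Measure ℝ) (Set.Iic s)).toReal))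
        = (μ ^ 2 * (1 - δ) ^ 2) * ((gaussianReal 0 1 : Measure ℝ) (Set.Iic s)).toReal := by
          ring
      _ ≤ ∫ z in Set.Iic s, f z ∂(gaussianReal 0 1) :=
          setIntegral_ge_of_const_le_real measurableSet_Iic (measure_ne_top _ _) hlow
            hint.integrableOn
      _ ≤ ∫ z, f z ∂(gaussianReal 0 1) :=
          setIntegral_le_integral hint (ae_of_all _ fun z => sq_nonneg _)
end
end

section
/- Fix r > 0 and η ∈ (0, 1). Let π be any prior probability measure on ℝ with π({0}) ≥ 1 − η, and let p̂_π be its Bayes predictive density. Then the KL risk at the origin satisfies ρ(0, p̂_π) = E_{X ~ N(0,1)} KL( N(0, r) ‖ p̂_π(·|X) ) ≤ log( 1/(1−η) ). -/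
open MeasureTheory ProbabilityTheory Filter
open scoped ENNReal NNReal

noncomputable section

section Aux

open Real

lemma gaussianPDFReal_comm (a b : ℝ) (v : ℝ≥0) :
    gaussianPDFReal a v b = gaussianPDFReal b v a := by
  unfold gaussianPDFReal
  rw [show (b - a) ^ 2 = (a - b) ^ 2 by ring]

lemma gaussianPDFReal_le_bound (μ : ℝ) (v : ℝ≥0) (x : ℝ) :
    gaussianPDFReal μ v x ≤ (Real.sqrt (2 * Real.pi * v))⁻¹ := by
  unfold gaussianPDFReal
  have h1 : Real.exp (-(x - μ) ^ 2 / (2 * v)) ≤ 1 := by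
    rw [Real.exp_le_one_iff]
    apply div_nonpos_of_nonpos_of_nonneg
    · simp [sq_nonneg]
    · positivity
  exact mul_le_of_le_one_right (by positivity) h1

lemma measurable_gaussianPDFReal_pair (v : ℝ≥0) :
    Measurable (fun p : ℝ × ℝ => gaussianPDFReal p.2 v p.1) := by
  unfold gaussianPDFReal
  fun_prop

/-- Lower bound for an integral over a probability measure giving mass at least `a` to `{0}`. -/
lemma mul_apply_zero_le_integral {pr : Measure ℝ} [IsProbabilityMeasure pr] {g : ℝ → ℝ}
    (hg : Integrable g pr) (hg0 : ∀ θ, 0 ≤ g θ) {a : ℝ} (ha : 0 ≤ a)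
    (h0 : ENNReal.ofReal a ≤ pr {0}) : a * g 0 ≤ ∫ θ, g θ ∂pr := by
  have h1 : ∫ θ in ({0} : Set ℝ), g θ ∂pr ≤ ∫ θ, g θ ∂pr :=
    setIntegral_le_integral hg (ae_of_all _ hg0)
  have h2 : ∫ θ in ({0} : Set ℝ), g θ ∂pr = (pr {0}).toReal * g 0 := by
    have heq : Set.EqOn g (fun _ => g 0) ({0} : Set ℝ) := by
      intro θ hθ
      simp only [Set.mem_singleton_iff] at hθ
      rw [hθ]
    rw [setIntegral_congr_fun (measurableSet_singleton 0) heq, setIntegral_const, smul_eq_mul]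
    rfl
  have h3 : a ≤ (pr {0}).toReal := by
    have := ENNReal.toReal_mono (measure_ne_top pr {0}) h0
    rwa [ENNReal.toReal_ofReal ha] at this
  calc a * g 0 ≤ (pr {0}).toReal * g 0 := by
        exact mul_le_mul_of_nonneg_right h3 (hg0 0)
    _ = ∫ θ in ({0} : Set ℝ), g θ ∂pr := h2.symm
    _ ≤ ∫ θ, g θ ∂pr := h1

lemma integral_le_const_of_ae_le {α : Type*} [MeasurableSpace α] {μ : Measure α}
    [IsProbabilityMeasure μ] {g : α → ℝ} {c : ℝ}
    (hc : 0 ≤ c) (h : ∀ᵐ x ∂μ, g x ≤ c) : ∫ x, g x ∂μ ≤ c := by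
  by_cases hg : Integrable g μ
  · calc ∫ x, g x ∂μ ≤ ∫ _, c ∂μ := integral_mono_ae hg (integrable_const c) h
      _ = c := by simp
  · rw [integral_undef hg]; exact hc

/-- Key abstract lemma: if `ν ≥ κ • μ` with `0 < κ ≤ 1` and `μ` a probability measure,
then `KL(μ‖ν) ≤ log κ⁻¹`. -/
lemma KLdiv_le_log_inv {μ ν : Measure ℝ} [IsProbabilityMeasure μ] [SigmaFinite ν]
    {κ : ℝ} (hκ0 : 0 < κ) (hκ1 : κ ≤ 1) (hle : ENNReal.ofReal κ • μ ≤ ν) :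
    KLdiv μ ν ≤ Real.log κ⁻¹ := by
  have hκne : ENNReal.ofReal κ ≠ 0 := by simp [hκ0, hκ0.le, ENNReal.ofReal_eq_zero, not_le]
  have hκnetop : ENNReal.ofReal κ ≠ ∞ := ENNReal.ofReal_ne_top
  have hinvne : (ENNReal.ofReal κ)⁻¹ ≠ 0 := by simp [hκnetop]
  have hinvnetop : (ENNReal.ofReal κ)⁻¹ ≠ ∞ := by simp [hκne]
  -- μ ≤ κ⁻¹ • ν
  have hμν : μ ≤ (ENNReal.ofReal κ)⁻¹ • ν := by
    rw [Measure.le_iff]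
    intro s hs
    have h1 : ENNReal.ofReal κ * μ s ≤ ν s := by
      have := Measure.le_iff.mp hle s hs
      simpa using this
    calc μ s = (ENNReal.ofReal κ)⁻¹ * (ENNReal.ofReal κ * μ s) := by
          rw [← mul_assoc, ENNReal.inv_mul_cancel hκne hκnetop, one_mul]
      _ ≤ (ENNReal.ofReal κ)⁻¹ * ν s := by gcongr
      _ = ((ENNReal.ofReal κ)⁻¹ • ν) s := by simp
  have hac : μ ≪ ν := by
    refine Measure.AbsolutelyContinuous.mk (fun s hs hνs => ?_)
    have := Measure.le_iff.mp hμν s hs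
    simp only [Measure.smul_apply, smul_eq_mul, hνs, mul_zero] at this
    exact le_antisymm this zero_le
  have hsf : SigmaFinite ((ENNReal.ofReal κ)⁻¹ • ν) := by
    refine ⟨⟨⟨fun n => spanningSets ν n, fun _ => trivial, fun n => ?_, iUnion_spanningSets ν⟩⟩⟩
    simp only [Measure.smul_apply, smul_eq_mul]
    exact ENNReal.mul_lt_top hinvnetop.lt_top (measure_spanningSets_lt_top ν n)
  have h1 : μ.rnDeriv ((ENNReal.ofReal κ)⁻¹ • ν) ≤ᵐ[(ENNReal.ofReal κ)⁻¹ • ν] 1 :=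
    Measure.rnDeriv_le_one_of_le hμν
  have h1' : μ.rnDeriv ((ENNReal.ofReal κ)⁻¹ • ν) ≤ᵐ[ν] 1 := by
    rwa [Measure.ae_ennreal_smul_measure_eq hinvne] at h1
  have h2 : μ.rnDeriv ((ENNReal.ofReal κ)⁻¹ • ν)
      =ᵐ[ν] ((ENNReal.ofReal κ)⁻¹)⁻¹ • μ.rnDeriv ν :=
    Measure.rnDeriv_smul_right_of_ne_top' μ ν hinvne hinvnetop
  have hbound : μ.rnDeriv ν ≤ᵐ[ν] fun _ => (ENNReal.ofReal κ)⁻¹ := by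
    filter_upwards [h1', h2] with y hy1 hy2
    have : ENNReal.ofReal κ * μ.rnDeriv ν y ≤ 1 := by
      rw [inv_inv] at hy2
      calc ENNReal.ofReal κ * μ.rnDeriv ν y = (ENNReal.ofReal κ • μ.rnDeriv ν) y := rfl
        _ = μ.rnDeriv ((ENNReal.ofReal κ)⁻¹ • ν) y := hy2.symm
        _ ≤ 1 := hy1
    calc μ.rnDeriv ν y = (ENNReal.ofReal κ)⁻¹ * (ENNReal.ofReal κ * μ.rnDeriv ν y) := by
          rw [← mul_assoc, ENNReal.inv_mul_cancel hκne hκnetop, one_mul]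
      _ ≤ (ENNReal.ofReal κ)⁻¹ * 1 := by gcongr
      _ = (ENNReal.ofReal κ)⁻¹ := mul_one _
  have hboundμ : ∀ᵐ y ∂μ, μ.rnDeriv ν y ≤ (ENNReal.ofReal κ)⁻¹ := hac.ae_le hbound
  have hlogbound : ∀ᵐ y ∂μ, Real.log ((μ.rnDeriv ν y).toReal) ≤ Real.log κ⁻¹ := by
    filter_upwards [hboundμ] with y hy
    have hinv : (ENNReal.ofReal κ)⁻¹ = ENNReal.ofReal κ⁻¹ := by
      rw [← ENNReal.ofReal_inv_of_pos hκ0]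
    have ht : (μ.rnDeriv ν y).toReal ≤ κ⁻¹ := by
      rw [hinv] at hy
      calc (μ.rnDeriv ν y).toReal ≤ (ENNReal.ofReal κ⁻¹).toReal :=
            ENNReal.toReal_mono ENNReal.ofReal_ne_top hy
        _ = κ⁻¹ := ENNReal.toReal_ofReal (by positivity)
    rcases eq_or_lt_of_le (ENNReal.toReal_nonneg (a := μ.rnDeriv ν y)) with h0 | h0
    · rw [← h0, Real.log_zero]
      exact Real.log_nonneg (one_le_inv_iff₀.mpr ⟨hκ0, hκ1⟩)
    · exact Real.log_le_log h0 ht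
  exact integral_le_const_of_ae_le (Real.log_nonneg (one_le_inv_iff₀.mpr ⟨hκ0, hκ1⟩)) hlogbound

end Aux

/-- for any prior `π` with `π({0}) ≥ 1 − η`, the KL risk at the
origin of the Bayes predictive density satisfies `ρ(0, p̂_π) ≤ log(1/(1−η))`. -/
theorem bayes_predictive_density_risk_at_zero
    (r : ℝ≥0) (hr : 0 < r) (η : ℝ) (hη : η ∈ Set.Ioo (0 : ℝ) 1)
    (π : Measure ℝ) (hπ : IsProbabilityMeasure π)
    (h0 : ENNReal.ofReal (1 - η) ≤ π {0}) :
    risk1 r 0 (bayesPredMeasure r π) ≤ Real.log (1 / (1 - η)) := by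
  obtain ⟨hη0, hη1⟩ := hη
  have h1η : (0:ℝ) < 1 - η := by linarith
  have hrne : r ≠ 0 := hr.ne'
  -- abbreviations
  set φ1 : ℝ → ℝ := gaussianPDFReal 0 1 with hφ1_def
  set φr : ℝ → ℝ := gaussianPDFReal 0 r with hφr_def
  set m : ℝ → ℝ := fun x => ∫ θ, gaussianPDFReal θ 1 x ∂π with hm_def
  have hφ1pos : ∀ x, 0 < φ1 x := fun x => gaussianPDFReal_pos 0 1 x one_ne_zero
  have hφrpos : ∀ y, 0 < φr y := fun y => gaussianPDFReal_pos 0 r y hrne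
  -- integrability in θ
  have hint1 : ∀ (v : ℝ≥0) (x : ℝ), Integrable (fun θ => gaussianPDFReal θ v x) π := by
    intro v x
    refine Integrable.mono' (integrable_const ((Real.sqrt (2 * Real.pi * v))⁻¹)) ?_ ?_
    · have : (fun θ => gaussianPDFReal θ v x) = gaussianPDFReal x v := by
        funext θ; exact gaussianPDFReal_comm θ x v
      rw [this]
      exact (measurable_gaussianPDFReal x v).aestronglyMeasurable
    · refine ae_of_all _ fun θ => ?_
      rw [Real.norm_of_nonneg (gaussianPDFReal_nonneg _ _ _)]
      exact gaussianPDFReal_le_bound _ _ _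
  have hint2 : ∀ (x y : ℝ),
      Integrable (fun θ => gaussianPDFReal θ r y * gaussianPDFReal θ 1 x) π := by
    intro x y
    refine Integrable.mono'
      (integrable_const ((Real.sqrt (2 * Real.pi * r))⁻¹ * (Real.sqrt (2 * Real.pi * (1:ℝ≥0)))⁻¹))
      ?_ ?_
    · have h1 : (fun θ => gaussianPDFReal θ r y) = gaussianPDFReal y r := by
        funext θ; exact gaussianPDFReal_comm θ y r
      have h2 : (fun θ => gaussianPDFReal θ 1 x) = gaussianPDFReal x 1 := by
        funext θ; exact gaussianPDFReal_comm θ x 1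
      have : (fun θ => gaussianPDFReal θ r y * gaussianPDFReal θ 1 x)
          = fun θ => gaussianPDFReal y r θ * gaussianPDFReal x 1 θ := by
        funext θ; rw [gaussianPDFReal_comm θ y r, gaussianPDFReal_comm θ x 1]
      rw [this]
      exact ((measurable_gaussianPDFReal y r).mul (measurable_gaussianPDFReal x 1)).aestronglyMeasurable
    · refine ae_of_all _ fun θ => ?_
      rw [Real.norm_of_nonneg (mul_nonneg (gaussianPDFReal_nonneg _ _ _) (gaussianPDFReal_nonneg _ _ _))]
      exact mul_le_mul (gaussianPDFReal_le_bound _ _ _) (gaussianPDFReal_le_bound _ _ _)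
        (gaussianPDFReal_nonneg _ _ _) (by positivity)
  -- bounds on m
  have hmlb : ∀ x, (1 - η) * φ1 x ≤ m x := by
    intro x
    have := mul_apply_zero_le_integral (pr := π) (hint1 1 x)
      (fun θ => gaussianPDFReal_nonneg _ _ _) h1η.le h0
    simpa [hm_def, hφ1_def] using this
  have hmpos : ∀ x, 0 < m x := fun x =>
    lt_of_lt_of_le (by have := hφ1pos x; positivity) (hmlb x)
  have hmub : ∀ x, m x ≤ (Real.sqrt (2 * Real.pi * (1:ℝ≥0)))⁻¹ := by
    intro x
    calc m x ≤ ∫ _, (Real.sqrt (2 * Real.pi * (1:ℝ≥0)))⁻¹ ∂π :=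
          integral_mono (hint1 1 x) (integrable_const _) fun θ => gaussianPDFReal_le_bound _ _ _
      _ = (Real.sqrt (2 * Real.pi * (1:ℝ≥0)))⁻¹ := by simp
  -- lower bound on the numerator
  have hnum : ∀ x y, (1 - η) * (φr y * φ1 x)
      ≤ ∫ θ, gaussianPDFReal θ r y * gaussianPDFReal θ 1 x ∂π := by
    intro x y
    have := mul_apply_zero_le_integral (pr := π) (hint2 x y)
      (fun θ => mul_nonneg (gaussianPDFReal_nonneg _ _ _) (gaussianPDFReal_nonneg _ _ _))
      h1η.le h0
    simpa [hφ1_def, hφr_def] using this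
  -- the constant κ x
  set κ : ℝ → ℝ := fun x => (1 - η) * φ1 x / m x with hκ_def
  have hκpos : ∀ x, 0 < κ x := fun x => div_pos (by have := hφ1pos x; positivity) (hmpos x)
  have hκle1 : ∀ x, κ x ≤ 1 := fun x => (div_le_one (hmpos x)).mpr (hmlb x)
  -- measure domination
  have hle : ∀ x, ENNReal.ofReal (κ x) • gaussianReal 0 r ≤ bayesPredMeasure r π x := by
    intro x
    rw [gaussianReal_of_var_ne_zero 0 hrne, bayesPredMeasure,
      ← withDensity_smul' _ _ ENNReal.ofReal_ne_top]
    refine withDensity_mono (ae_of_all _ fun y => ?_)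
    simp only [Pi.smul_apply, gaussianPDF, smul_eq_mul]
    rw [← ENNReal.ofReal_mul (hκpos x).le]
    apply ENNReal.ofReal_le_ofReal
    have hEq : κ x * gaussianPDFReal 0 r y = (1 - η) * (φr y * φ1 x) / m x := by
      rw [hκ_def]
      have : gaussianPDFReal 0 r y = φr y := rfl
      rw [this]; ring
    rw [hEq]
    have h1 : (∫ θ, gaussianPDFReal θ 1 x ∂π) = m x := rfl
    rw [h1]
    exact div_le_div_of_nonneg_right (hnum x y) (hmpos x).le
  -- pointwise KL bound
  have hK : ∀ x, KLdiv (gaussianReal 0 r) (bayesPredMeasure r π x) ≤ Real.log (κ x)⁻¹ := by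
    intro x
    have hsf : SigmaFinite (bayesPredMeasure r π x) :=
      MeasureTheory.SigmaFinite.withDensity_ofReal _
    exact KLdiv_le_log_inv (hκpos x) (hκle1 x) (hle x)
  have hRHS : Real.log (1 / (1 - η)) = -Real.log (1 - η) := by
    rw [one_div, Real.log_inv]
  have hRHSnn : 0 ≤ Real.log (1 / (1 - η)) := by
    rw [hRHS, neg_nonneg]
    exact Real.log_nonpos (by linarith) (by linarith)
  -- measurability of m
  have hmeasm : Measurable m := by
    have h : StronglyMeasurable (fun p : ℝ × ℝ => gaussianPDFReal p.2 1 p.1) :=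
      (measurable_gaussianPDFReal_pair 1).stronglyMeasurable
    exact h.integral_prod_right'.measurable
  have hφ1meas : Measurable φ1 := measurable_gaussianPDFReal 0 1
  -- integrability of log φ1
  set B : ℝ := (Real.sqrt (2 * Real.pi * (1:ℝ≥0)))⁻¹ with hB_def
  have hBpos : 0 < B := by rw [hB_def]; positivity
  have hφ1eq : ∀ x : ℝ, φ1 x = B * Real.exp (-(2⁻¹ : ℝ) * x ^ 2) := by
    intro x
    rw [hφ1_def, hB_def]
    simp only [gaussianPDFReal, NNReal.coe_one, sub_zero, mul_one]
    congr 1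
    ring
  have hlogφ1eq : ∀ x : ℝ, Real.log (φ1 x) = Real.log B + (-(2⁻¹ : ℝ) * x ^ 2) := by
    intro x
    rw [hφ1eq x, Real.log_mul hBpos.ne' (Real.exp_ne_zero _), Real.log_exp]
  have hx2 : Integrable (fun x : ℝ => x ^ 2) (gaussianReal 0 1) := by
    rw [gaussianReal_of_var_ne_zero 0 one_ne_zero]
    rw [integrable_withDensity_iff (measurable_gaussianPDF 0 1)
      (ae_of_all _ fun _ => ENNReal.ofReal_lt_top)]
    have heq : (fun x : ℝ => x ^ 2 * ((gaussianPDF 0 1 x).toReal))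
        = fun x : ℝ => B * (x ^ (2:ℝ) * Real.exp (-(2⁻¹ : ℝ) * x ^ 2)) := by
      funext x
      rw [gaussianPDF, ENNReal.toReal_ofReal (gaussianPDFReal_nonneg _ _ _)]
      have : gaussianPDFReal 0 1 x = φ1 x := rfl
      rw [this, hφ1eq x, show (x : ℝ) ^ (2:ℝ) = x ^ 2 by
        rw [show (2:ℝ) = ((2:ℕ):ℝ) by norm_num, Real.rpow_natCast]]
      ring
    rw [heq]
    exact (integrable_rpow_mul_exp_neg_mul_sq (by norm_num) (by norm_num)).const_mul B
  have hlogφ1int : Integrable (fun x => Real.log (φ1 x)) (gaussianReal 0 1) := by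
    have : (fun x => Real.log (φ1 x)) = fun x : ℝ => Real.log B + (-(2⁻¹ : ℝ) * x ^ 2) := by
      funext x; exact hlogφ1eq x
    rw [this]
    exact (integrable_const _).add ((hx2.const_mul _))
  -- integrability of log m
  have hlogmub : ∀ x, Real.log (m x) ≤ Real.log B := fun x =>
    Real.log_le_log (hmpos x) (hmub x)
  have hlogmlb : ∀ x, Real.log (1 - η) + Real.log (φ1 x) ≤ Real.log (m x) := by
    intro x
    rw [← Real.log_mul h1η.ne' (hφ1pos x).ne']
    exact Real.log_le_log (by have := hφ1pos x; positivity) (hmlb x)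
  have hlogmint : Integrable (fun x => Real.log (m x)) (gaussianReal 0 1) := by
    refine Integrable.mono'
      (g := fun x => |Real.log (1 - η) + Real.log (φ1 x)| + |Real.log B|) ?_ ?_ ?_
    · exact (((integrable_const _).add hlogφ1int).abs).add (integrable_const _)
    · exact (hmeasm.log).aestronglyMeasurable
    · refine ae_of_all _ fun x => ?_
      have hb : ‖Real.log (m x)‖ ≤ |Real.log (1 - η) + Real.log (φ1 x)| + |Real.log B| := by
        rw [Real.norm_eq_abs, abs_le]
        constructor
        · have h1 : -(|Real.log (1 - η) + Real.log (φ1 x)| + |Real.log B|)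
              ≤ Real.log (1 - η) + Real.log (φ1 x) := by
            have := abs_nonneg (Real.log B)
            have := neg_abs_le (Real.log (1 - η) + Real.log (φ1 x))
            linarith
          linarith [hlogmlb x]
        · have := le_abs_self (Real.log B)
          have := abs_nonneg (Real.log (1 - η) + Real.log (φ1 x))
          linarith [hlogmub x]
      exact hb
  have hlmint : Integrable (fun x => Real.log (m x) - Real.log (φ1 x)) (gaussianReal 0 1) :=
    hlogmint.sub hlogφ1int
  -- the Gibbs step : ∫ log (m/φ1) ≤ 0
  have hg_lint : ∫⁻ x, ENNReal.ofReal (m x / φ1 x) ∂(gaussianReal 0 1) = 1 := by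
    have hgmeas : Measurable fun x => ENNReal.ofReal (m x / φ1 x) :=
      (hmeasm.div hφ1meas).ennreal_ofReal
    rw [gaussianReal_of_var_ne_zero 0 one_ne_zero,
      lintegral_withDensity_eq_lintegral_mul _ (measurable_gaussianPDF 0 1) hgmeas]
    have hpt : ∀ x, (gaussianPDF 0 1 x * ENNReal.ofReal (m x / φ1 x)) = ENNReal.ofReal (m x) := by
      intro x
      rw [gaussianPDF, ← ENNReal.ofReal_mul (gaussianPDFReal_nonneg _ _ _)]
      congr 1
      have : gaussianPDFReal 0 1 x = φ1 x := rfl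
      rw [this]
      field_simp [(hφ1pos x).ne']
    calc ∫⁻ x, (gaussianPDF 0 1 * fun x => ENNReal.ofReal (m x / φ1 x)) x
          = ∫⁻ x, ENNReal.ofReal (m x) := by
          apply lintegral_congr
          intro x
          exact hpt x
      _ = ∫⁻ x, ∫⁻ θ, ENNReal.ofReal (gaussianPDFReal θ 1 x) ∂π := by
          apply lintegral_congr
          intro x
          rw [hm_def]
          exact ofReal_integral_eq_lintegral_ofReal (hint1 1 x)
            (ae_of_all _ fun θ => gaussianPDFReal_nonneg _ _ _)
      _ = ∫⁻ θ, ∫⁻ x, ENNReal.ofReal (gaussianPDFReal θ 1 x) ∂volume ∂π := by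
          apply lintegral_lintegral_swap
          exact ((measurable_gaussianPDFReal_pair 1).ennreal_ofReal).aemeasurable
      _ = ∫⁻ θ, 1 ∂π := by
          apply lintegral_congr
          intro θ
          exact lintegral_gaussianPDF_eq_one θ one_ne_zero
      _ = 1 := by simp
  have hgnn : ∀ x, 0 ≤ m x / φ1 x := fun x => div_nonneg (hmpos x).le (hφ1pos x).le
  have hg_int : Integrable (fun x => m x / φ1 x) (gaussianReal 0 1) := by
    refine ⟨(hmeasm.div hφ1meas).aestronglyMeasurable, ?_⟩
    rw [hasFiniteIntegral_iff_norm]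
    have : ∀ x : ℝ, ENNReal.ofReal ‖m x / φ1 x‖ = ENNReal.ofReal (m x / φ1 x) := fun x => by
      rw [Real.norm_of_nonneg (hgnn x)]
    calc ∫⁻ x, ENNReal.ofReal ‖m x / φ1 x‖ ∂(gaussianReal 0 1)
        = ∫⁻ x, ENNReal.ofReal (m x / φ1 x) ∂(gaussianReal 0 1) := lintegral_congr this
      _ = 1 := hg_lint
      _ < ⊤ := ENNReal.one_lt_top
  have hg_val : ∫ x, m x / φ1 x ∂(gaussianReal 0 1) = 1 := by
    rw [integral_eq_lintegral_of_nonneg_ae (ae_of_all _ hgnn)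
      (hmeasm.div hφ1meas).aestronglyMeasurable, hg_lint]
    simp
  have hGibbs : ∫ x, (Real.log (m x) - Real.log (φ1 x)) ∂(gaussianReal 0 1) ≤ 0 := by
    have hpt : ∀ x, Real.log (m x) - Real.log (φ1 x) ≤ m x / φ1 x - 1 := by
      intro x
      rw [← Real.log_div (hmpos x).ne' (hφ1pos x).ne']
      exact Real.log_le_sub_one_of_pos (div_pos (hmpos x) (hφ1pos x))
    calc ∫ x, (Real.log (m x) - Real.log (φ1 x)) ∂(gaussianReal 0 1)
        ≤ ∫ x, (m x / φ1 x - 1) ∂(gaussianReal 0 1) :=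
          integral_mono hlmint (hg_int.sub (integrable_const 1)) hpt
      _ = 0 := by
          rw [integral_sub hg_int (integrable_const 1), hg_val]
          simp
  -- rewriting log κ⁻¹
  have hκinv : ∀ x, Real.log (κ x)⁻¹
      = (Real.log (m x) - Real.log (φ1 x)) + (-Real.log (1 - η)) := by
    intro x
    rw [Real.log_inv, hκ_def]
    rw [Real.log_div (by have := hφ1pos x; positivity) (hmpos x).ne',
      Real.log_mul h1η.ne' (hφ1pos x).ne']
    ring
  have hcint : Integrable (fun x => Real.log (κ x)⁻¹) (gaussianReal 0 1) := by
    have : (fun x => Real.log (κ x)⁻¹)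
        = fun x => (Real.log (m x) - Real.log (φ1 x)) + (-Real.log (1 - η)) := by
      funext x; exact hκinv x
    rw [this]
    exact hlmint.add (integrable_const _)
  have hfin : ∫ x, Real.log (κ x)⁻¹ ∂(gaussianReal 0 1) ≤ Real.log (1 / (1 - η)) := by
    have : (fun x => Real.log (κ x)⁻¹)
        = fun x => (Real.log (m x) - Real.log (φ1 x)) + (-Real.log (1 - η)) := by
      funext x; exact hκinv x
    rw [this, integral_add hlmint (integrable_const _), integral_const]
    simp only [probReal_univ, ENNReal.toReal_one, one_smul, hRHS]
    linarith [hGibbs]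
  -- conclusion
  unfold risk1
  by_cases hKint : Integrable
      (fun x => KLdiv (gaussianReal 0 r) (bayesPredMeasure r π x)) (gaussianReal 0 1)
  · calc ∫ x, KLdiv (gaussianReal 0 r) (bayesPredMeasure r π x) ∂(gaussianReal 0 1)
        ≤ ∫ x, Real.log (κ x)⁻¹ ∂(gaussianReal 0 1) := integral_mono hKint hcint fun x => hK x
      _ ≤ Real.log (1 / (1 - η)) := hfin
  · rw [integral_undef hKint]
    exact hRHSnn
end
end
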